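/- Reversibility criterion for the Boltzmann–Enskog equation: let f ∈ C¹ solve ∂f/∂t = -v1·∇_r f + (na²)∫_{⟨v21,σ⟩≥0} ⟨v21,σ⟩ [f(r1,v1',t) f(r1+aσ,v2',t) - f(r1,v1,t) f(r1-aσ,v2,t)] dσ dv2. Then f̃(r,v,t) := f(r,-v,-t) satisfies the same equation if and only if, after substitution, the collision integral applied to f̃ with pre- and post-collision velocities swapped agrees with the original; in particular, a sufficient condition is that f(r1,v1,t) f(r1-aσ,v2,t) = f(r1,v1',t) f(r1-aσ,v2',t) for all r1, v1, v2, t and unit σ with ⟨v21,σ⟩ ≥ 0. -/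

import Mathlib

open scoped RealInnerProductSpace
open MeasureTheory

abbrev E := EuclideanSpace ℝ (Fin 3)

/-- The Boltzmann--Enskog collision integral of `f` at `(r1, v1, t)`:
`n a² ∫_{⟨v21,σ⟩≥0} ⟨v21,σ⟩ [f(r1,v1',t) f(r1+aσ,v2',t) - f(r1,v1,t) f(r1-aσ,v2,t)] dσ dv2`,
where `v1' = v1 + σ⟨v21,σ⟩`, `v2' = v2 - σ⟨v21,σ⟩` and the `σ`-integral is with
respect to the 2-dimensional Hausdorff (surface) measure on the unit sphere. -/
noncomputable def enskogCollision (a n : ℝ) (f : E × E × ℝ → ℝ) (r1 v1 : E) (t : ℝ) : ℝ :=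
  n * a ^ 2 *
    ∫ v2 : E, ∫ σ in {σ : E | ‖σ‖ = 1 ∧ 0 ≤ ⟪v2 - v1, σ⟫},
      ⟪v2 - v1, σ⟫ *
        (f (r1, v1 + ⟪v2 - v1, σ⟫ • σ, t) * f (r1 + a • σ, v2 - ⟪v2 - v1, σ⟫ • σ, t)
          - f (r1, v1, t) * f (r1 - a • σ, v2, t)) ∂(μH[2])

/-- `f` solves the Boltzmann--Enskog equation
`∂f/∂t = -v1·∇_r f + St f` (derivatives expressed via Fréchet derivatives). -/
def SolvesBE (a n : ℝ) (f : E × E × ℝ → ℝ) : Prop :=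
  ∀ (r1 v1 : E) (t : ℝ),
    fderiv ℝ f (r1, v1, t) (0, 0, 1) =
      -(fderiv ℝ f (r1, v1, t) (v1, 0, 0)) + enskogCollision a n f r1 v1 t

theorem BE_reversible_of_factorization (a n : ℝ) (ha : 0 < a) (hn : 0 < n)
    (f : E × E × ℝ → ℝ) (hf : SolvesBE a n f)
    (hfact : ∀ (r1 v1 v2 : E) (t : ℝ) (σ : E), ‖σ‖ = 1 → 0 ≤ ⟪v2 - v1, σ⟫ →
      f (r1, v1, t) * f (r1 - a • σ, v2, t)
        = f (r1, v1 + ⟪v2 - v1, σ⟫ • σ, t) * f (r1 - a • σ, v2 - ⟪v2 - v1, σ⟫ • σ, t)) :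
    SolvesBE a n (fun p => f (p.1, -p.2.1, -p.2.2)) := by
  -- measure-preserving negation on E for the Hausdorff measure
  have hneg_mp : MeasurePreserving (fun σ : E => -σ) (μH[2] : Measure E) μH[2] := by
    refine ⟨measurable_neg, ?_⟩
    have h := (IsometryEquiv.neg E).map_hausdorffMeasure (2 : ℝ)
    have hco : ⇑(IsometryEquiv.neg E) = fun σ : E => -σ := rfl
    rwa [hco] at h
  have hneg_emb : MeasurableEmbedding (fun σ : E => -σ) :=
    (MeasurableEquiv.neg E).measurableEmbedding
  -- key: collision integral of reversed f
  have key : ∀ (r1 v1 : E) (t : ℝ),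
      enskogCollision a n (fun p => f (p.1, -p.2.1, -p.2.2)) r1 v1 t
        = - enskogCollision a n f r1 (-v1) (-t) := by
    intro r1 v1 t
    unfold enskogCollision
    rw [← mul_neg]
    congr 1
    rw [← integral_neg_eq_self
      (fun v2 : E => ∫ σ in {σ : E | ‖σ‖ = 1 ∧ 0 ≤ ⟪v2 - -v1, σ⟫},
        ⟪v2 - -v1, σ⟫ *
          (f (r1, -v1 + ⟪v2 - -v1, σ⟫ • σ, -t) * f (r1 + a • σ, v2 - ⟪v2 - -v1, σ⟫ • σ, -t)
            - f (r1, -v1, -t) * f (r1 - a • σ, v2, -t)) ∂(μH[2])) volume]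
    rw [← integral_neg]
    congr 1
    funext v2
    -- substitute σ ↦ -σ in the inner integral
    have hpre : (fun σ : E => -σ) ⁻¹'
        {σ : E | ‖σ‖ = 1 ∧ 0 ≤ ⟪-v2 - -v1, σ⟫} = {σ : E | ‖σ‖ = 1 ∧ 0 ≤ ⟪v2 - v1, σ⟫} := by
      ext σ
      simp only [Set.mem_preimage, Set.mem_setOf_eq, norm_neg]
      have hs : ⟪-v2 - -v1, -σ⟫ = (⟪v2 - v1, σ⟫ : ℝ) := by
        rw [show (-v2 - -v1 : E) = -(v2 - v1) by abel, inner_neg_neg]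
      rw [hs]
    have hsub := hneg_mp.setIntegral_preimage_emb hneg_emb
      (fun σ : E => ⟪-v2 - -v1, σ⟫ *
        (f (r1, -v1 + ⟪-v2 - -v1, σ⟫ • σ, -t) * f (r1 + a • σ, -v2 - ⟪-v2 - -v1, σ⟫ • σ, -t)
          - f (r1, -v1, -t) * f (r1 - a • σ, -v2, -t)))
      {σ : E | ‖σ‖ = 1 ∧ 0 ≤ ⟪-v2 - -v1, σ⟫}
    rw [← hsub, hpre, ← integral_neg]
    have hmeas : MeasurableSet {σ : E | ‖σ‖ = 1 ∧ 0 ≤ ⟪v2 - v1, σ⟫} := by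
      have h1 : MeasurableSet {σ : E | ‖σ‖ = 1} :=
        (isClosed_eq continuous_norm continuous_const).measurableSet
      have h2 : MeasurableSet {σ : E | 0 ≤ ⟪v2 - v1, σ⟫} :=
        (isClosed_le continuous_const (continuous_const.inner continuous_id)).measurableSet
      exact h1.inter h2
    refine setIntegral_congr_fun hmeas ?_
    intro σ hσ
    obtain ⟨hσ1, hσ2⟩ := hσ
    set k : ℝ := ⟪v2 - v1, σ⟫ with hk
    have hσσ : ⟪σ, σ⟫ = (1 : ℝ) := by
      rw [real_inner_self_eq_norm_sq, hσ1]; norm_num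
    have hicalc : ⟪-v2 - -v1, -σ⟫ = k := by
      rw [show (-v2 - -v1 : E) = -(v2 - v1) by abel, inner_neg_neg]
    have e1 : r1 - a • -σ = r1 + a • σ := by
      simp [sub_eq_add_neg, smul_neg]
    have e1' : r1 + a • -σ = r1 - a • σ := by
      simp [sub_eq_add_neg, smul_neg]
    have e2 : -v1 + k • -σ = -(v1 + k • σ) := by
      rw [smul_neg]; abel
    have e3 : -v2 - k • -σ = -(v2 - k • σ) := by
      rw [smul_neg]; abel
    -- first hfact application : f(r1,-v1)f(r1+aσ,-v2) = f(r1,-(v1'))f(r1+aσ,-(v2'))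
    have h1 := hfact r1 (-v1) (-v2) (-t) (-σ) (by rwa [norm_neg]) (by rw [hicalc]; exact hσ2)
    rw [hicalc, e1, e2, e3] at h1
    -- second hfact application : f(r1,-(v1'))f(r1-aσ,-(v2')) = f(r1,-v1)f(r1-aσ,-v2)
    have hi2 : ⟪-(v2 - k • σ) - -(v1 + k • σ), σ⟫ = k := by
      rw [show -(v2 - k • σ) - -(v1 + k • σ) = -(v2 - v1) + (2 * k) • σ by
        rw [two_mul, add_smul]; abel]
      rw [inner_add_left, inner_neg_left, real_inner_smul_left, hσσ, ← hk]
      ring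
    have h2 := hfact r1 (-(v1 + k • σ)) (-(v2 - k • σ)) (-t) σ hσ1
      (by rw [hi2]; exact hσ2)
    rw [hi2] at h2
    have e4 : -(v1 + k • σ) + k • σ = -v1 := by abel
    have e5 : -(v2 - k • σ) - k • σ = -v2 := by abel
    rw [e4, e5] at h2
    -- conclude pointwise
    show k * (f (r1, -(v1 + k • σ), -t) * f (r1 + a • σ, -(v2 - k • σ), -t)
        - f (r1, -v1, -t) * f (r1 - a • σ, -v2, -t))
      = -(⟪-v2 - -v1, -σ⟫ *
          (f (r1, -v1 + ⟪-v2 - -v1, -σ⟫ • -σ, -t)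
              * f (r1 + a • -σ, -v2 - ⟪-v2 - -v1, -σ⟫ • -σ, -t)
            - f (r1, -v1, -t) * f (r1 - a • -σ, -v2, -t)))
    rw [hicalc, e1, e1', e2, e3, ← h1, ← h2]
    ring
  -- derivative part via linear change of variables
  set L : (E × E × ℝ) ≃L[ℝ] (E × E × ℝ) :=
    (ContinuousLinearEquiv.refl ℝ E).prodCongr
      ((ContinuousLinearEquiv.neg ℝ).prodCongr (ContinuousLinearEquiv.neg ℝ)) with hL
  have hgL : (fun p : E × E × ℝ => f (p.1, -p.2.1, -p.2.2)) = f ∘ L := rfl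
  intro r1 v1 t
  have hfd : ∀ u : E × E × ℝ,
      fderiv ℝ (fun p : E × E × ℝ => f (p.1, -p.2.1, -p.2.2)) (r1, v1, t) u
        = fderiv ℝ f (r1, -v1, -t) (L u) := by
    intro u
    rw [hgL, L.comp_right_fderiv]
    rfl
  have hLt : L ((0 : E), (0 : E), (1 : ℝ)) = (0, 0, -1) := by
    simp [hL, ContinuousLinearEquiv.prodCongr_apply]
  have hLv : L ((v1 : E), (0 : E), (0 : ℝ)) = (v1, 0, 0) := by
    simp [hL, ContinuousLinearEquiv.prodCongr_apply]
  have hbe := hf r1 (-v1) (-t)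
  have hneg1 : fderiv ℝ f (r1, -v1, -t) ((0 : E), (0 : E), (-1 : ℝ))
      = -(fderiv ℝ f (r1, -v1, -t) (0, 0, 1)) := by
    rw [← map_neg]; norm_num
  have hneg2 : fderiv ℝ f (r1, -v1, -t) ((-v1 : E), (0 : E), (0 : ℝ))
      = -(fderiv ℝ f (r1, -v1, -t) (v1, 0, 0)) := by
    rw [← map_neg]; norm_num
  rw [hfd, hfd, hLt, hLv, hneg1, hbe, key r1 v1 t, hneg2]
  ring
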